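/- Suppose μ₁,...,μₙ are i.i.d. Uniform[c₀, c₁] with c₁ > c₀, and let Δᵢ = μᵢ - min_j μⱼ. Then E[∑ᵢ min(K·log(n)/Δᵢ², n)] = O(n^{3/2}·log^{1/2} n) for any fixed constant K > 0. -/

import Mathlib

open MeasureTheory ProbabilityTheory Filter Asymptotics Set

lemma measurable_finset_inf' {α ι : Type*} [MeasurableSpace α] (s : Finset ι) (hs : s.Nonempty)
    (g : ι → α → ℝ) (hg : ∀ i, Measurable (g i)) :
    Measurable fun x => s.inf' hs fun j => g j x := by
  induction hs using Finset.Nonempty.cons_induction with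
  | singleton i => simpa using hg i
  | cons i s hi hsne ih =>
      have : (fun x => (Finset.cons i s hi).inf' (Finset.cons_nonempty hi) fun j => g j x)
          = fun x => min (g i x) (s.inf' hsne fun j => g j x) := by
        funext x; rw [Finset.inf'_cons]
      rw [this]
      exact (hg i).min ih

lemma finset_inf'_attach {ι : Type*} (s : Finset ι) (hs : s.Nonempty) (f : ι → ℝ) :
    s.attach.inf' (by simpa using hs) (fun j => f j) = s.inf' hs f := by
  rw [Finset.inf'_eq_csInf_image, Finset.inf'_eq_csInf_image]
  congr 1
  ext x
  simp

section Key

variable {Ω : Type*} [MeasureSpace Ω] [IsProbabilityMeasure (ℙ : Measure Ω)]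
    (c₀ c₁ K : ℝ) (U : ℕ → Ω → ℝ)

lemma key_bound (hc : c₀ < c₁) (hK : 0 < K)
    (hmeas : ∀ i, Measurable (U i))
    (hindep : iIndepFun U ℙ)
    (hunif : ∀ i, Measure.map (U i) ℙ =
      (ENNReal.ofReal (c₁ - c₀))⁻¹ • (volume.restrict (Set.Icc c₀ c₁)))
    (n : ℕ) (hn : 2 ≤ n) :
    ∫ ω, ∑ i ∈ Finset.range n,
        min (K * Real.log n / (U i ω - ⨅ j : Fin n, U j ω) ^ 2) (n : ℝ) ∂ℙ
      ≤ n + 2 * n * Real.sqrt (K * Real.log n * n) / (c₁ - c₀) := by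
  have hL : (0:ℝ) < c₁ - c₀ := sub_pos.mpr hc
  set L : ℝ := c₁ - c₀ with hLdef
  have hn1 : (1:ℝ) < (n:ℝ) := by exact_mod_cast lt_of_lt_of_le one_lt_two hn
  have hnpos : (0:ℝ) < (n:ℝ) := lt_trans one_pos hn1
  set a : ℝ := K * Real.log n with hadef
  have ha : 0 < a := mul_pos hK (Real.log_pos hn1)
  set s : ℝ := Real.sqrt (a / n) with hsdef
  have hspos : 0 < s := Real.sqrt_pos.mpr (div_pos ha hnpos)
  have hs2 : s ^ 2 = a / n := Real.sq_sqrt (div_pos ha hnpos).le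
  haveI : Nonempty (Fin n) := ⟨⟨0, by omega⟩⟩
  -- the minimum over all n values
  set V : Ω → ℝ := fun ω => ⨅ j : Fin n, U j ω with hVdef
  have hVeq : V = fun ω => (Finset.univ : Finset (Fin n)).inf' Finset.univ_nonempty
      (fun j => U j ω) := funext fun ω => (Finset.inf'_univ_eq_ciInf _).symm
  have hVmeas : Measurable V := by
    rw [hVeq]
    exact measurable_finset_inf' _ _ _ (fun j => hmeas j)
  -- the minimum over the other values
  have hIne : ∀ i : ℕ, ((Finset.range n).erase i).Nonempty := by
    intro i
    refine ⟨if i = 0 then 1 else 0, ?_⟩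
    rcases eq_or_ne i 0 with h | h <;> simp [Finset.mem_erase, h] <;> omega
  set M : ℕ → Ω → ℝ := fun i ω => ((Finset.range n).erase i).inf' (hIne i) (fun j => U j ω)
    with hMdef
  have hMmeas : ∀ i, Measurable (M i) := fun i =>
    measurable_finset_inf' _ _ _ (fun j => hmeas j)
  have hVleM : ∀ i ω, V ω ≤ M i ω := by
    intro i ω
    obtain ⟨j, hj, hje⟩ := Finset.exists_mem_eq_inf' (hIne i) (fun j => U j ω)
    have hjn : j < n := Finset.mem_range.mp (Finset.mem_of_mem_erase hj)
    have h1 : V ω ≤ U j ω :=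
      ciInf_le (Set.Finite.bddBelow (Set.finite_range fun j : Fin n => U (↑j) ω))
        (⟨j, hjn⟩ : Fin n)
    have h2 : M i ω = U j ω := hje
    rw [h2]
    exact h1
  have hMleU : ∀ i j ω, j ∈ (Finset.range n).erase i → M i ω ≤ U j ω := by
    intro i j ω hj
    exact Finset.inf'_le _ hj
  -- the summands
  set f : ℕ → Ω → ℝ := fun i ω => min (a / (U i ω - V ω) ^ 2) (n : ℝ) with hfdef
  have hfmeas : ∀ i, Measurable (f i) := fun i =>
    (measurable_const.div (((hmeas i).sub hVmeas).pow_const 2)).min measurable_const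
  have hf_nonneg : ∀ i ω, 0 ≤ f i ω := fun i ω =>
    le_min (div_nonneg ha.le (sq_nonneg _)) hnpos.le
  have hf_le : ∀ i ω, f i ω ≤ n := fun i ω => min_le_right _ _
  have hf_int : ∀ i, Integrable (f i) ℙ := by
    intro i
    refine Integrable.mono' (integrable_const (n:ℝ)) (hfmeas i).aestronglyMeasurable ?_
    filter_upwards with ω
    rw [Real.norm_eq_abs, abs_of_nonneg (hf_nonneg i ω)]
    exact hf_le i ω
  -- the auxiliary functions
  set g : ℝ → ℝ → ℝ := fun m x => if x ≤ m then 0 else if x ≤ m + s then (n:ℝ) else a/(x - m)^2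
    with hgdef
  have hg_nonneg : ∀ m x, 0 ≤ g m x := by
    intro m x
    rw [hgdef]
    dsimp only
    split_ifs with h1 h2
    · exact le_refl 0
    · exact hnpos.le
    · exact div_nonneg ha.le (sq_nonneg _)
  have hg_le : ∀ m x, g m x ≤ n := by
    intro m x
    rw [hgdef]
    dsimp only
    split_ifs with h1 h2
    · exact hnpos.le
    · exact le_refl _
    · push_neg at h2
      have hxm : s < x - m := by linarith
      have hsq : s ^ 2 ≤ (x - m) ^ 2 := by nlinarith
      calc a / (x - m) ^ 2 ≤ a / s ^ 2 :=
            div_le_div_of_nonneg_left ha.le (by positivity) hsq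
        _ = a / (a / n) := by rw [hs2]
        _ = n := by field_simp
  have hGmeas : Measurable (fun p : ℝ × ℝ => g p.1 p.2) := by
    rw [hgdef]
    apply Measurable.ite (measurableSet_le measurable_snd measurable_fst) measurable_const
    apply Measurable.ite (measurableSet_le measurable_snd (measurable_fst.add_const s))
      measurable_const
    exact measurable_const.div ((measurable_snd.sub measurable_fst).pow_const 2)
  set χ : ℕ → Ω → ℝ := fun i ω => if U i ω ≤ M i ω then (n:ℝ) else 0 with hχdef
  have hχmeas : ∀ i, Measurable (χ i) := fun i =>
    Measurable.ite (measurableSet_le (hmeas i) (hMmeas i)) measurable_const measurable_const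
  have hχ_nonneg : ∀ i ω, 0 ≤ χ i ω := by
    intro i ω
    rw [hχdef]; dsimp only; split_ifs
    · exact hnpos.le
    · exact le_refl 0
  have hχ_le : ∀ i ω, χ i ω ≤ n := by
    intro i ω
    rw [hχdef]; dsimp only; split_ifs
    · exact le_refl _
    · exact hnpos.le
  have hχ_int : ∀ i, Integrable (χ i) ℙ := by
    intro i
    refine Integrable.mono' (integrable_const (n:ℝ)) (hχmeas i).aestronglyMeasurable ?_
    filter_upwards with ω
    rw [Real.norm_eq_abs, abs_of_nonneg (hχ_nonneg i ω)]
    exact hχ_le i ω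
  have hgM_meas : ∀ i, Measurable (fun ω => g (M i ω) (U i ω)) := fun i =>
    hGmeas.comp ((hMmeas i).prodMk (hmeas i))
  have hgM_int : ∀ i, Integrable (fun ω => g (M i ω) (U i ω)) ℙ := by
    intro i
    refine Integrable.mono' (integrable_const (n:ℝ)) (hgM_meas i).aestronglyMeasurable ?_
    filter_upwards with ω
    rw [Real.norm_eq_abs, abs_of_nonneg (hg_nonneg _ _)]
    exact hg_le _ _
  -- pointwise bound
  have hpt : ∀ i ω, f i ω ≤ χ i ω + g (M i ω) (U i ω) := by
    intro i ω
    rw [hfdef, hχdef, hgdef]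
    dsimp only
    by_cases h1 : U i ω ≤ M i ω
    · rw [if_pos h1, if_pos h1]
      have := min_le_right (a / (U i ω - V ω) ^ 2) (n:ℝ)
      linarith
    · rw [if_neg h1, if_neg h1]
      by_cases h2 : U i ω ≤ M i ω + s
      · rw [if_pos h2]
        have := min_le_right (a / (U i ω - V ω) ^ 2) (n:ℝ)
        linarith
      · rw [if_neg h2]
        push_neg at h1 h2
        have hVM := hVleM i ω
        have hxm : 0 < U i ω - M i ω := by linarith
        have hsq : (U i ω - M i ω) ^ 2 ≤ (U i ω - V ω) ^ 2 := by nlinarith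
        have hle : a / (U i ω - V ω) ^ 2 ≤ a / (U i ω - M i ω) ^ 2 :=
          div_le_div_of_nonneg_left ha.le (by positivity) hsq
        have := min_le_left (a / (U i ω - V ω) ^ 2) (n:ℝ)
        linarith
  -- Part 1 : the expected number of "near-minimal" indices is at most one
  have hdistinct : ∀ i j : ℕ, i ≠ j → ∀ᵐ ω ∂ℙ, U i ω ≠ U j ω := by
    intro i j hij
    haveI : IsProbabilityMeasure (Measure.map (U j) ℙ) :=
      Measure.isProbabilityMeasure_map (hmeas j).aemeasurable
    have hIF : IndepFun (U i) (U j) ℙ := hindep.indepFun hij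
    have hmap := (indepFun_iff_map_prod_eq_prod_map_map (hmeas i).aemeasurable
      (hmeas j).aemeasurable).mp hIF
    have hdiag : MeasurableSet {p : ℝ × ℝ | p.1 = p.2} :=
      measurableSet_eq_fun measurable_fst measurable_snd
    have h0 : ℙ {ω | U i ω = U j ω} = 0 := by
      have heq : ℙ {ω | U i ω = U j ω}
          = Measure.map (fun ω => (U i ω, U j ω)) ℙ {p : ℝ × ℝ | p.1 = p.2} := by
        rw [Measure.map_apply ((hmeas i).prodMk (hmeas j)) hdiag]
        rfl
      rw [heq, hmap, Measure.prod_apply hdiag]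
      have hz : ∀ x : ℝ, (Measure.map (U j) ℙ) (Prod.mk x ⁻¹' {p : ℝ × ℝ | p.1 = p.2}) = 0 := by
        intro x
        have hpre : Prod.mk x ⁻¹' {p : ℝ × ℝ | p.1 = p.2} = {x} := by
          ext y; simp [eq_comm]
        rw [hpre, hunif j, Measure.smul_apply,
          Measure.restrict_apply (measurableSet_singleton x)]
        have : (volume ({x} ∩ Icc c₀ c₁) : ENNReal) = 0 :=
          measure_mono_null Set.inter_subset_left Real.volume_singleton
        rw [this, smul_zero]
      simp only [hz, lintegral_zero]
    have hset : {ω | ¬ U i ω ≠ U j ω} = {ω | U i ω = U j ω} := by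
      ext ω; simp
    rw [ae_iff, hset]
    exact h0
  have hae_distinct : ∀ᵐ ω ∂ℙ, ∀ i j : ℕ, i ≠ j → U i ω ≠ U j ω := by
    rw [ae_all_iff]
    intro i
    rw [ae_all_iff]
    intro j
    rcases eq_or_ne i j with h | h
    · filter_upwards with ω hij
      exact absurd h hij
    · filter_upwards [hdistinct i j h] with ω hω _
      exact hω
  have hsum_chi_ae : ∀ᵐ ω ∂ℙ, ∑ i ∈ Finset.range n, χ i ω ≤ (n:ℝ) := by
    filter_upwards [hae_distinct] with ω hω
    by_cases hex : ∃ i ∈ Finset.range n, U i ω ≤ M i ω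
    · obtain ⟨i₀, hi₀, hle₀⟩ := hex
      have hz : ∀ i ∈ Finset.range n, i ≠ i₀ → χ i ω = 0 := by
        intro i hi hne
        rw [hχdef]
        dsimp only
        rw [if_neg]
        intro hcon
        have h1 : U i ω ≤ U i₀ ω :=
          le_trans hcon (hMleU i i₀ ω (Finset.mem_erase.mpr ⟨hne.symm, hi₀⟩))
        have h2 : U i₀ ω ≤ U i ω :=
          le_trans hle₀ (hMleU i₀ i ω (Finset.mem_erase.mpr ⟨hne, hi⟩))
        exact hω i i₀ hne (le_antisymm h1 h2)
      rw [Finset.sum_eq_single_of_mem i₀ hi₀ hz]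
      exact hχ_le i₀ ω
    · push_neg at hex
      have : ∀ i ∈ Finset.range n, χ i ω = 0 := by
        intro i hi
        rw [hχdef]
        dsimp only
        rw [if_neg (not_le.mpr (hex i hi))]
      rw [Finset.sum_congr rfl this, Finset.sum_const, smul_zero]
      exact hnpos.le
  have hPart1 : ∑ i ∈ Finset.range n, ∫ ω, χ i ω ∂ℙ ≤ (n:ℝ) := by
    rw [← integral_finset_sum _ (fun i _ => hχ_int i)]
    calc ∫ ω, ∑ i ∈ Finset.range n, χ i ω ∂ℙ ≤ ∫ _, (n:ℝ) ∂ℙ :=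
          integral_mono_ae (integrable_finset_sum _ fun i _ => hχ_int i)
            (integrable_const _) hsum_chi_ae
      _ = n := by simp
  -- Part 2 : the integral of g-composition is bounded
  -- norm facts about s
  have hns : (n:ℝ) * s = Real.sqrt (a * n) := by
    have hsq : ((n:ℝ) * s) ^ 2 = a * n := by
      rw [mul_pow, hs2]
      field_simp
    rw [← hsq, Real.sqrt_sq (by positivity)]
  have hsinv : a * s⁻¹ = Real.sqrt (a * n) := by
    have hsq : (a * s⁻¹) ^ 2 = a * n := by
      rw [mul_pow, inv_pow, hs2]
      field_simp
    rw [← hsq, Real.sqrt_sq (by positivity)]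
  have hPart2 : ∀ i, ∫ ω, g (M i ω) (U i ω) ∂ℙ ≤ 2 * Real.sqrt (a * n) / L := by
    intro i
    haveI hPU : IsProbabilityMeasure (Measure.map (U i) ℙ) :=
      Measure.isProbabilityMeasure_map (hmeas i).aemeasurable
    haveI hPM : IsProbabilityMeasure (Measure.map (M i) ℙ) :=
      Measure.isProbabilityMeasure_map (hMmeas i).aemeasurable
    -- independence of M i and U i
    set T := ((Finset.range n).erase i) with hTdef
    have hdisj : Disjoint T ({i} : Finset ℕ) :=
      Finset.disjoint_singleton_right.mpr (Finset.notMem_erase i _)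
    have h0 := hindep.indepFun_finset T {i} hdisj hmeas
    have hTa : T.attach.Nonempty := by simpa using hIne i
    set ψ : ({x // x ∈ T} → ℝ) → ℝ :=
      fun v => T.attach.inf' (by simpa using hIne i) (fun j => v j) with hψdef
    have hψmeas : Measurable ψ :=
      measurable_finset_inf' _ _ (fun j (v : {x // x ∈ T} → ℝ) => v j)
        (fun j => measurable_pi_apply j)
    set e : ({x // x ∈ ({i} : Finset ℕ)} → ℝ) → ℝ :=
      fun v => v ⟨i, Finset.mem_singleton_self i⟩ with hedef
    have hemeas : Measurable e := measurable_pi_apply _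
    have hIF : IndepFun (M i) (U i) ℙ := by
      have hcomp := h0.comp hψmeas hemeas
      have hM : M i = ψ ∘ (fun ω (j : {x // x ∈ T}) => U (↑j) ω) := by
        funext ω
        exact (finset_inf'_attach T (hIne i) (fun j => U j ω)).symm
      have hU : U i = e ∘ (fun ω (j : {x // x ∈ ({i} : Finset ℕ)}) => U (↑j) ω) := rfl
      rw [hM, hU]
      exact hcomp
    have hmapPair : Measure.map (fun ω => (M i ω, U i ω)) ℙ = (Measure.map (M i) ℙ).prod (Measure.map (U i) ℙ) :=
      (indepFun_iff_map_prod_eq_prod_map_map (hMmeas i).aemeasurable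
        (hmeas i).aemeasurable).mp hIF
    have hint_pair : ∫ ω, g (M i ω) (U i ω) ∂ℙ
        = ∫ p : ℝ × ℝ, g p.1 p.2 ∂((Measure.map (M i) ℙ).prod (Measure.map (U i) ℙ)) := by
      rw [← hmapPair, integral_map ((hMmeas i).prodMk (hmeas i)).aemeasurable
        hGmeas.aestronglyMeasurable]
    have hGint : Integrable (fun p : ℝ × ℝ => g p.1 p.2) ((Measure.map (M i) ℙ).prod (Measure.map (U i) ℙ)) := by
      refine Integrable.mono' (integrable_const (n:ℝ)) hGmeas.aestronglyMeasurable ?_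
      filter_upwards with p
      rw [Real.norm_eq_abs, abs_of_nonneg (hg_nonneg _ _)]
      exact hg_le _ _
    -- the inner integral bound
    have hinner : ∀ m : ℝ, ∫ x, g m x ∂(Measure.map (U i) ℙ) ≤ 2 * Real.sqrt (a * n) / L := by
      intro m
      have hgm_meas : Measurable (g m) :=
        hGmeas.comp (measurable_const.prodMk measurable_id)
      set φ₁ : ℝ → ℝ := Set.indicator (Ioc m (m + s)) (fun _ => (n:ℝ)) with hφ1def
      set φ₂ : ℝ → ℝ := Set.indicator (Ioi (m + s)) (fun x => a / (x - m) ^ 2) with hφ2def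
      have hφ1_nonneg : ∀ x, 0 ≤ φ₁ x := fun x =>
        Set.indicator_nonneg (fun _ _ => hnpos.le) x
      have hφ2_nonneg : ∀ x, 0 ≤ φ₂ x := fun x =>
        Set.indicator_nonneg (fun y _ => div_nonneg ha.le (sq_nonneg _)) x
      have hφ1int : Integrable φ₁ := by
        rw [hφ1def, integrable_indicator_iff measurableSet_Ioc]
        exact integrableOn_const measure_Ioc_lt_top.ne
      have hbase : IntegrableOn (fun u : ℝ => a / u ^ 2) (Ioi s) := by
        refine IntegrableOn.congr_fun
          (((integrableOn_Ioi_rpow_of_lt (by norm_num : (-2:ℝ) < -1)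
            hspos)).const_mul a) ?_ measurableSet_Ioi
        intro u hu
        have hu0 : 0 < u := hspos.trans hu
        show a * u ^ (-2:ℝ) = a / u ^ 2
        rw [show (-2:ℝ) = -((2:ℕ):ℝ) by norm_num, Real.rpow_neg hu0.le, Real.rpow_natCast,
          ← div_eq_mul_inv]
      have hvalbase : ∫ u in Ioi s, a / u ^ 2 = a * s⁻¹ := by
        have hEq : ∀ u ∈ Ioi s, a / u ^ 2 = a * u ^ (-2:ℝ) := by
          intro u hu
          have hu0 : 0 < u := hspos.trans hu
          rw [show (-2:ℝ) = -((2:ℕ):ℝ) by norm_num, Real.rpow_neg hu0.le, Real.rpow_natCast,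
            ← div_eq_mul_inv]
        rw [setIntegral_congr_fun measurableSet_Ioi hEq, MeasureTheory.integral_const_mul,
          integral_Ioi_rpow_of_lt (by norm_num : (-2:ℝ) < -1) hspos]
        rw [show (-2:ℝ) + 1 = -1 by norm_num, Real.rpow_neg_one]
        ring
      have hφ2_comp : φ₂ = fun x => (Set.indicator (Ioi s) (fun u => a / u ^ 2)) (x - m) := by
        funext x
        rw [hφ2def]
        simp only [Set.indicator_apply, mem_Ioi]
        by_cases h : m + s < x
        · rw [if_pos h, if_pos (by linarith)]
        · rw [if_neg h, if_neg (by intro hcon; exact h (by linarith))]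
      have hind_int : Integrable (Set.indicator (Ioi s) fun u => a / u ^ 2) volume :=
        (integrable_indicator_iff measurableSet_Ioi).mpr hbase
      have hφ2int : Integrable φ₂ := by
        rw [hφ2_comp]
        exact hind_int.comp_sub_right m
      have hφ2val : ∫ x, φ₂ x = a * s⁻¹ := by
        rw [hφ2_comp,
          integral_sub_right_eq_self (Set.indicator (Ioi s) fun u => a / u ^ 2) m,
          integral_indicator measurableSet_Ioi]
        exact hvalbase
      have hgle2 : ∀ x, g m x ≤ φ₁ x + φ₂ x := by
        intro x
        rw [hgdef, hφ1def, hφ2def]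
        dsimp only
        by_cases h1 : x ≤ m
        · rw [if_pos h1]
          exact add_nonneg (hφ1_nonneg x) (hφ2_nonneg x)
        · rw [if_neg h1]
          push_neg at h1
          by_cases h2 : x ≤ m + s
          · rw [if_pos h2]
            have hmem : x ∈ Ioc m (m + s) := ⟨h1, h2⟩
            rw [Set.indicator_of_mem hmem]
            have := hφ2_nonneg x
            simp only [hφ2def] at this
            linarith
          · rw [if_neg h2]
            push_neg at h2
            have hmem : x ∈ Ioi (m + s) := h2
            rw [Set.indicator_of_mem hmem]
            have := hφ1_nonneg x
            simp only [hφ1def] at this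
            linarith
      have hgmint : IntegrableOn (g m) (Icc c₀ c₁) volume := by
        have hcint : IntegrableOn (fun _ : ℝ => (n:ℝ)) (Icc c₀ c₁) volume :=
          integrableOn_const measure_Icc_lt_top.ne
        refine Integrable.mono' hcint hgm_meas.aestronglyMeasurable ?_
        filter_upwards with x
        rw [Real.norm_eq_abs, abs_of_nonneg (hg_nonneg _ _)]
        exact hg_le _ _
      have hmain : ∫ x in Icc c₀ c₁, g m x ≤ 2 * Real.sqrt (a * n) := by
        calc ∫ x in Icc c₀ c₁, g m x ≤ ∫ x in Icc c₀ c₁, (φ₁ x + φ₂ x) :=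
              setIntegral_mono_on hgmint ((hφ1int.add hφ2int).integrableOn)
                measurableSet_Icc (fun x _ => hgle2 x)
          _ ≤ ∫ x, (φ₁ x + φ₂ x) :=
              setIntegral_le_integral (hφ1int.add hφ2int)
                (Filter.Eventually.of_forall fun x =>
                  add_nonneg (hφ1_nonneg x) (hφ2_nonneg x))
          _ = (n : ℝ) * s + a * s⁻¹ := by
              rw [integral_add hφ1int hφ2int, hφ2val, hφ1def,
                integral_indicator_const _ measurableSet_Ioc]
              rw [measureReal_def, Real.volume_Ioc, add_sub_cancel_left, ENNReal.toReal_ofReal hspos.le,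
                smul_eq_mul, mul_comm]
          _ = 2 * Real.sqrt (a * n) := by rw [hns, hsinv]; ring
      rw [hunif i, integral_smul_measure]
      have htoReal : ((ENNReal.ofReal L)⁻¹).toReal = L⁻¹ := by
        rw [ENNReal.toReal_inv, ENNReal.toReal_ofReal hL.le]
      rw [htoReal, smul_eq_mul]
      calc L⁻¹ * ∫ x in Icc c₀ c₁, g m x ≤ L⁻¹ * (2 * Real.sqrt (a * n)) :=
            mul_le_mul_of_nonneg_left hmain (inv_nonneg.mpr hL.le)
        _ = 2 * Real.sqrt (a * n) / L := by rw [mul_comm, div_eq_mul_inv]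
    rw [hint_pair, MeasureTheory.integral_prod _ hGint]
    calc ∫ m, ∫ x, g (m, x).1 (m, x).2 ∂(Measure.map (U i) ℙ) ∂(Measure.map (M i) ℙ)
        ≤ ∫ _, 2 * Real.sqrt (a * n) / L ∂(Measure.map (M i) ℙ) :=
          integral_mono (hGint.integral_prod_left) (integrable_const _)
            (fun m => hinner m)
      _ = 2 * Real.sqrt (a * n) / L := by simp
  -- combine everything
  have hiInfeq : ∀ ω, (⨅ j : Fin n, U (↑j) ω) = V ω := fun ω => rfl
  calc ∫ ω, ∑ i ∈ Finset.range n, min (a / (U i ω - ⨅ j : Fin n, U j ω) ^ 2) (n : ℝ) ∂ℙ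
      = ∑ i ∈ Finset.range n, ∫ ω, f i ω ∂ℙ := by
        rw [← integral_finset_sum _ (fun i _ => hf_int i)]
    _ ≤ ∑ i ∈ Finset.range n, (∫ ω, χ i ω ∂ℙ + 2 * Real.sqrt (a * n) / L) := by
        refine Finset.sum_le_sum fun i _ => ?_
        have h1 : ∫ ω, f i ω ∂ℙ ≤ ∫ ω, (χ i ω + g (M i ω) (U i ω)) ∂ℙ :=
          integral_mono (hf_int i) ((hχ_int i).add (hgM_int i)) (fun ω => hpt i ω)
        rw [integral_add (hχ_int i) (hgM_int i)] at h1
        exact le_trans h1 (add_le_add_right (hPart2 i) _)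
    _ = (∑ i ∈ Finset.range n, ∫ ω, χ i ω ∂ℙ) + n * (2 * Real.sqrt (a * n) / L) := by
        rw [Finset.sum_add_distrib, Finset.sum_const, Finset.card_range, nsmul_eq_mul]
    _ ≤ n + n * (2 * Real.sqrt (a * n) / L) := add_le_add_left hPart1 _
    _ = n + 2 * n * Real.sqrt (a * n) / L := by ring

end Key

/-- Under an i.i.d. Uniform[c₀,c₁] prior on the mean distances, the expected Med-dit sample
complexity bound `∑ᵢ min(K·log n/Δᵢ², n)`, where `Δᵢ` is the gap to the minimum of the first
`n` values, is `O(n^{3/2}·log^{1/2} n)`. -/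
theorem stmt14 {Ω : Type*} [MeasureSpace Ω] [IsProbabilityMeasure (ℙ : Measure Ω)]
    (c₀ c₁ K : ℝ) (hc : c₀ < c₁) (hK : 0 < K)
    (U : ℕ → Ω → ℝ) (hmeas : ∀ i, Measurable (U i))
    (hindep : iIndepFun U ℙ)
    (hunif : ∀ i, Measure.map (U i) ℙ =
      (ENNReal.ofReal (c₁ - c₀))⁻¹ • (volume.restrict (Set.Icc c₀ c₁))) :
    (fun n : ℕ => ∫ ω, ∑ i ∈ Finset.range n,
        min (K * Real.log n / (U i ω - ⨅ j : Fin n, U j ω) ^ 2) (n : ℝ) ∂ℙ)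
      =O[atTop] (fun n : ℕ => (n : ℝ) ^ ((3 : ℝ) / 2) * Real.sqrt (Real.log n)) := by
  have hL : (0:ℝ) < c₁ - c₀ := sub_pos.mpr hc
  rw [Asymptotics.isBigO_iff]
  refine ⟨1 + 2 * Real.sqrt K / (c₁ - c₀), ?_⟩
  filter_upwards [eventually_ge_atTop 3] with n hn3
  have hn2 : 2 ≤ n := by omega
  have hn3' : (3:ℝ) ≤ (n:ℝ) := by exact_mod_cast hn3
  have hnpos : (0:ℝ) < (n:ℝ) := by linarith
  have key := key_bound c₀ c₁ K U hc hK hmeas hindep hunif n hn2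
  have hlog1 : (1:ℝ) ≤ Real.log n := by
    rw [Real.le_log_iff_exp_le hnpos]
    calc Real.exp 1 ≤ 2.7182818286 := Real.exp_one_lt_d9.le
      _ ≤ (n:ℝ) := by linarith
  have hlognn : (0:ℝ) ≤ Real.log n := by linarith
  have hnn : 0 ≤ ∫ ω, ∑ i ∈ Finset.range n,
      min (K * Real.log n / (U i ω - ⨅ j : Fin n, U j ω) ^ 2) (n : ℝ) ∂ℙ := by
    apply integral_nonneg
    intro ω
    apply Finset.sum_nonneg
    intro i _
    exact le_min (div_nonneg (mul_nonneg hK.le hlognn) (sq_nonneg _)) (Nat.cast_nonneg n)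
  have hRHSnn : 0 ≤ (n : ℝ) ^ ((3 : ℝ) / 2) * Real.sqrt (Real.log n) :=
    mul_nonneg (Real.rpow_nonneg (Nat.cast_nonneg n) _) (Real.sqrt_nonneg _)
  rw [Real.norm_eq_abs, abs_of_nonneg hnn, Real.norm_eq_abs, abs_of_nonneg hRHSnn]
  have hrpow : (n:ℝ) ^ ((3:ℝ)/2) = n * Real.sqrt n := by
    rw [show (3:ℝ)/2 = 1 + 1/2 by norm_num, Real.rpow_add hnpos, Real.rpow_one,
      Real.sqrt_eq_rpow]
  have hsqrtlog : (1:ℝ) ≤ Real.sqrt (Real.log n) := by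
    calc (1:ℝ) = Real.sqrt 1 := Real.sqrt_one.symm
      _ ≤ Real.sqrt (Real.log n) := Real.sqrt_le_sqrt hlog1
  have hsqrtn : (1:ℝ) ≤ Real.sqrt n := by
    calc (1:ℝ) = Real.sqrt 1 := Real.sqrt_one.symm
      _ ≤ Real.sqrt n := Real.sqrt_le_sqrt (by linarith)
  have h2 : 2 * n * Real.sqrt (K * Real.log n * n) / (c₁ - c₀)
      = (2 * Real.sqrt K / (c₁ - c₀)) * ((n:ℝ) ^ ((3:ℝ)/2) * Real.sqrt (Real.log n)) := by
    rw [hrpow, Real.sqrt_mul (by positivity : (0:ℝ) ≤ K * Real.log n),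
      Real.sqrt_mul hK.le]
    field_simp
  have h1 : (n:ℝ) ≤ (n:ℝ) ^ ((3:ℝ)/2) * Real.sqrt (Real.log n) := by
    rw [hrpow]
    calc (n:ℝ) = n * 1 * 1 := by ring
      _ ≤ n * Real.sqrt n * Real.sqrt (Real.log n) := by
          apply mul_le_mul
          · exact mul_le_mul_of_nonneg_left hsqrtn hnpos.le
          · exact hsqrtlog
          · norm_num
          · positivity
  calc ∫ ω, ∑ i ∈ Finset.range n,
        min (K * Real.log n / (U i ω - ⨅ j : Fin n, U j ω) ^ 2) (n : ℝ) ∂ℙ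
      ≤ n + 2 * n * Real.sqrt (K * Real.log n * n) / (c₁ - c₀) := key
    _ = n + (2 * Real.sqrt K / (c₁ - c₀)) * ((n:ℝ) ^ ((3:ℝ)/2) * Real.sqrt (Real.log n)) := by
        rw [h2]
    _ ≤ (n:ℝ) ^ ((3:ℝ)/2) * Real.sqrt (Real.log n)
        + (2 * Real.sqrt K / (c₁ - c₀)) * ((n:ℝ) ^ ((3:ℝ)/2) * Real.sqrt (Real.log n)) :=
        add_le_add_left h1 _
    _ = (1 + 2 * Real.sqrt K / (c₁ - c₀)) * ((n:ℝ) ^ ((3:ℝ)/2) * Real.sqrt (Real.log n)) := by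
        ring
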